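/- The function K defined on (0, ∞) by K(x) = (√π/2) · (e^{−x²}/x) · erfi(x), where erfi(x) = (2/√π) ∫₀ˣ e^{t²} dt, is strictly decreasing on (0, ∞): for all real numbers x, y with 0 < x < y, K(y) < K(x). -/

import Mathlib

open Real

/-- The imaginary error function `erfi x = (2/√π) ∫₀ˣ e^{t²} dt`. -/
noncomputable def erfi (x : ℝ) : ℝ :=
  (2 / Real.sqrt π) * ∫ t in (0:ℝ)..x, Real.exp (t ^ 2)

/-- `K x = (√π/2) · (e^{−x²}/x) · erfi x`. -/
noncomputable def K (x : ℝ) : ℝ :=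
  (Real.sqrt π / 2) * (Real.exp (-x ^ 2) / x) * erfi x

noncomputable def F (x : ℝ) : ℝ := ∫ t in (0:ℝ)..x, Real.exp (t ^ 2)

lemma cont_exp_sq : Continuous fun t : ℝ => Real.exp (t ^ 2) :=
  Real.continuous_exp.comp (continuous_pow 2)

lemma hasDerivAt_F (x : ℝ) : HasDerivAt F (Real.exp (x ^ 2)) x :=
  intervalIntegral.integral_hasDerivAt_right (cont_exp_sq.intervalIntegrable _ _)
    (cont_exp_sq.stronglyMeasurableAtFilter _ _) cont_exp_sq.continuousAt

lemma F_pos {x : ℝ} (hx : 0 < x) : 0 < F x :=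
  intervalIntegral.intervalIntegral_pos_of_pos (cont_exp_sq.intervalIntegrable _ _)
    (fun t => Real.exp_pos _) hx

lemma K_eq (x : ℝ) : K x = Real.exp (-x ^ 2) * F x / x := by
  have h : Real.sqrt π ≠ 0 := (Real.sqrt_pos.2 Real.pi_pos).ne'
  unfold K erfi F
  set I := ∫ t in (0:ℝ)..x, Real.exp (t ^ 2) with hI
  have h2 : Real.sqrt π * 2 ≠ 0 := by positivity
  field_simp

/-- key inequality : `x e^{x²} < (1+2x²) F x` for `x > 0`. -/
lemma key_ineq {x : ℝ} (hx : 0 < x) : x * Real.exp (x ^ 2) < (1 + 2 * x ^ 2) * F x := by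
  set g : ℝ → ℝ := fun x => (1 + 2 * x ^ 2) * F x - x * Real.exp (x ^ 2) with hg
  have hdg : ∀ y : ℝ, HasDerivAt g (4 * y * F y) y := by
    intro y
    have h1 : HasDerivAt (fun y : ℝ => (1 + 2 * y ^ 2) * F y)
        ((4 * y) * F y + (1 + 2 * y ^ 2) * Real.exp (y ^ 2)) y := by
      have ha : HasDerivAt (fun y : ℝ => 1 + 2 * y ^ 2) (4 * y) y := by
        have := ((hasDerivAt_pow 2 y).const_mul (2:ℝ)).const_add (1:ℝ)
        exact this.congr_deriv (by ring)
      exact ha.mul (hasDerivAt_F y)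
    have h2 : HasDerivAt (fun y : ℝ => y * Real.exp (y ^ 2))
        (1 * Real.exp (y ^ 2) + y * (Real.exp (y ^ 2) * (2 * y))) y := by
      have hb : HasDerivAt (fun y : ℝ => Real.exp (y ^ 2)) (Real.exp (y ^ 2) * (2 * y)) y := by
        have := (hasDerivAt_pow 2 y).exp
        convert this using 1; ring
      exact (hasDerivAt_id y).mul hb
    have := h1.sub h2
    exact this.congr_deriv (by ring)
  have hmono : StrictMonoOn g (Set.Ici 0) := by
    apply strictMonoOn_of_deriv_pos (convex_Ici 0)
      (fun y _ => ((hdg y).differentiableAt).continuousAt.continuousWithinAt)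
    intro y hy
    rw [interior_Ici] at hy
    rw [(hdg y).deriv]
    have hy0 : 0 < y := hy
    have hF := F_pos hy0
    have : (0:ℝ) < 4 * y := by linarith
    exact mul_pos this hF
  have h0 : g 0 = 0 := by simp [hg, F, intervalIntegral.integral_same]
  have h1 := hmono Set.self_mem_Ici (Set.mem_Ici.2 hx.le) hx
  rw [h0] at h1
  simp only [hg] at h1
  linarith

lemma hasDerivAt_K {x : ℝ} (hx : 0 < x) :
    HasDerivAt (fun y => Real.exp (-y ^ 2) * F y / y)
      ((((-(2 * x)) * Real.exp (-x ^ 2) * F x + Real.exp (-x ^ 2) * Real.exp (x ^ 2)) * x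
        - Real.exp (-x ^ 2) * F x * 1) / x ^ 2) x := by
  have hnum : HasDerivAt (fun y : ℝ => Real.exp (-y ^ 2) * F y)
      ((-(2 * x)) * Real.exp (-x ^ 2) * F x + Real.exp (-x ^ 2) * Real.exp (x ^ 2)) x := by
    have he : HasDerivAt (fun y : ℝ => Real.exp (-y ^ 2)) ((-(2 * x)) * Real.exp (-x ^ 2)) x := by
      have hp : HasDerivAt (fun y : ℝ => -y ^ 2) (-(2 * x)) x := by
        have := (hasDerivAt_pow 2 x).neg
        exact this.congr_deriv (by ring)
      have := hp.exp
      convert this using 1; ring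
    exact he.mul (hasDerivAt_F x)
  exact hnum.div (hasDerivAt_id x) hx.ne'

/-- `K` is strictly decreasing on `(0, ∞)`. -/
theorem K_strictAntiOn : ∀ x y : ℝ, 0 < x → x < y → K y < K x := by
  have hanti : StrictAntiOn (fun y => Real.exp (-y ^ 2) * F y / y) (Set.Ioi 0) := by
    apply strictAntiOn_of_deriv_neg (convex_Ioi 0)
    · intro y hy
      exact ((hasDerivAt_K hy).differentiableAt).continuousAt.continuousWithinAt
    · intro y hy
      rw [interior_Ioi] at hy
      have hy0 : 0 < y := hy
      rw [(hasDerivAt_K hy0).deriv]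
      have hkey := key_ineq hy0
      have hFpos := F_pos hy0
      have hE : Real.exp (-y ^ 2) * Real.exp (y ^ 2) = 1 := by
        rw [← Real.exp_add]; simp
      rw [hE]
      apply div_neg_of_neg_of_pos
      · have hEpos : (0:ℝ) < Real.exp (-y ^ 2) := Real.exp_pos _
        have h2 : y < (1 + 2 * y ^ 2) * F y * Real.exp (-y ^ 2) := by
          have := mul_lt_mul_of_pos_right hkey hEpos
          calc y = y * Real.exp (y ^ 2) * Real.exp (-y ^ 2) := by
                rw [mul_assoc, ← Real.exp_add]; simp
            _ < (1 + 2 * y ^ 2) * F y * Real.exp (-y ^ 2) := this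
        nlinarith [Real.exp_pos (-y ^ 2)]
      · positivity
  intro x y hx hxy
  have h2 := hanti (Set.mem_Ioi.2 hx) (Set.mem_Ioi.2 (hx.trans hxy)) hxy
  rw [K_eq, K_eq]
  exact h2
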